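/- Let X, Y be real normed spaces, T : X → Y bounded linear, q > 1, and R : X → ℝ convex. Let f† ∈ X, p̄ ∈ Y* with p̄ ∘ T ∈ ∂R(f†), ω̄ ∈ X, 0 < t̄ ≤ 1, and for each t ∈ (0, t̄] let ξ_t ∈ X* with ξ_t ∈ ∂R(f† − t ω̄). Assume: (a) there exist C_ω ≥ 0 and ω* ∈ X* such that ‖(p̄ ∘ T) − ξ_t − t ω*‖_{X*} ≤ C_ω t² for all t ∈ (0, t̄]; (b) there exist μ > 1 and C_μ > 0 such that R(f₁) − R(f₂) − ξ(f₁ − f₂) ≥ C_μ ‖f₁ − f₂‖^μ for all f₁, f₂ ∈ X and all ξ ∈ ∂R(f₂); (c) ω* = p̄⁽²⁾ ∘ T for some p̄⁽²⁾ ∈ Y*. Then there exists β ≥ 0 such that, with μ* the conjugate exponent of μ, for all f ∈ X and all t ∈ (0, t̄]: (ξ_t − p̄ ∘ T)(f† − t ω̄ − f) ≤ D_R^{ξ_t}(f, f† − t ω̄) + t² ‖p̄⁽²⁾‖ · ( t^{−q} ‖T f − T f† + t T ω̄‖^q )^{1/q} + β t^{2μ*}. -/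

import Mathlib

/-- Verification of the third order variational source condition
(Proposition `prop_vsc3_proof`, case 1, of the paper): a second order Taylor bound
for the subgradients, a `μ`-convexity lower bound for the Bregman distance of `R`,
and `ω* = p̄⁽²⁾ ∘ T` imply `VSC³` with `Φ(τ) = ‖p̄⁽²⁾‖ τ^{1/q}`. -/
theorem stmt_12 {X Y : Type*} [NormedAddCommGroup X] [NormedSpace ℝ X]
    [NormedAddCommGroup Y] [NormedSpace ℝ Y]
    (T : X →L[ℝ] Y) (q : ℝ) (hq : 1 < q)
    (R : X → ℝ) (hR : ConvexOn ℝ Set.univ R)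
    (fdag : X) (pbar : Y →L[ℝ] ℝ)
    (hpbar : ∀ h : X, R fdag + (pbar.comp T) (h - fdag) ≤ R h)
    (ωbar : X) (tbar : ℝ) (htbar : 0 < tbar) (htbar1 : tbar ≤ 1)
    (ξ : ℝ → (X →L[ℝ] ℝ))
    (hξ : ∀ t ∈ Set.Ioc (0 : ℝ) tbar, ∀ h : X,
      R (fdag - t • ωbar) + (ξ t) (h - (fdag - t • ωbar)) ≤ R h)
    -- (a) Taylor-type bound for the subgradients
    (Cω : ℝ) (hCω : 0 ≤ Cω) (ωstar : X →L[ℝ] ℝ)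
    (ha : ∀ t ∈ Set.Ioc (0 : ℝ) tbar, ‖pbar.comp T - ξ t - t • ωstar‖ ≤ Cω * t ^ 2)
    -- (b) μ-convexity of R
    (μ μs Cμ : ℝ) (hμ : 1 < μ) (hμs : 1 / μ + 1 / μs = 1) (hCμ : 0 < Cμ)
    (hb : ∀ (f₁ f₂ : X) (ζ : X →L[ℝ] ℝ),
      (∀ h : X, R f₂ + ζ (h - f₂) ≤ R h) →
      R f₁ - R f₂ - ζ (f₁ - f₂) ≥ Cμ * ‖f₁ - f₂‖ ^ μ)
    -- (c) ω* in the range of T*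
    (p2bar : Y →L[ℝ] ℝ) (hc : ωstar = p2bar.comp T) :
    ∃ β : ℝ, 0 ≤ β ∧ ∀ f : X, ∀ t ∈ Set.Ioc (0 : ℝ) tbar,
      (ξ t - pbar.comp T) (fdag - t • ωbar - f)
        ≤ R f - R (fdag - t • ωbar) - (ξ t) (f - (fdag - t • ωbar))
          + t ^ 2 * (‖p2bar‖ * (t ^ (-q) * ‖T f - T fdag + t • T ωbar‖ ^ q) ^ (1 / q))
          + β * t ^ (2 * μs) := by
  have hpq : μ.HolderConjugate μs := Real.holderConjugate_iff.mpr ⟨hμ, by simpa [one_div] using hμs⟩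
  have hμspos : 0 < μs := hpq.symm.pos
  have hApos : (0:ℝ) < (Cμ * μ) ^ (1/μ) :=
    Real.rpow_pos_of_pos (by positivity) _
  set A : ℝ := (Cμ * μ) ^ (1/μ) with hAdef
  refine ⟨(Cω / A) ^ μs / μs, by positivity, ?_⟩
  intro f t ht
  obtain ⟨ht0, htle⟩ := ht
  set g : X := fdag - t • ωbar with hgdef
  set v : Y := T f - T fdag + t • T ωbar with hvdef
  have hTfg : T (f - g) = v := by
    simp [hgdef, hvdef, map_sub, map_smul]
    abel
  have hbreg := hb f g (ξ t) (hξ t ⟨ht0, htle⟩)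
  set s : ℝ := ‖f - g‖ with hsdef
  have hs0 : 0 ≤ s := norm_nonneg _
  -- decomposition
  have hdecomp : (ξ t - pbar.comp T) (g - f)
      = (pbar.comp T - ξ t - t • ωstar) (f - g) + t * ωstar (f - g) := by
    simp only [ContinuousLinearMap.sub_apply, ContinuousLinearMap.smul_apply,
      smul_eq_mul, map_sub]
    ring
  -- term 1
  have h1 : (pbar.comp T - ξ t - t • ωstar) (f - g) ≤ Cω * t ^ 2 * s := by
    calc (pbar.comp T - ξ t - t • ωstar) (f - g)
        ≤ ‖(pbar.comp T - ξ t - t • ωstar) (f - g)‖ := le_abs_self _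
      _ ≤ ‖pbar.comp T - ξ t - t • ωstar‖ * ‖f - g‖ :=
          ContinuousLinearMap.le_opNorm _ _
      _ ≤ Cω * t ^ 2 * s :=
          mul_le_mul_of_nonneg_right (ha t ⟨ht0, htle⟩) (norm_nonneg _)
  -- Young
  have young := Real.young_inequality_of_nonneg
    (a := A * s) (b := Cω * t ^ 2 / A) (by positivity) (by positivity) hpq
  have hAμ : (A * s) ^ μ = Cμ * μ * s ^ μ := by
    rw [Real.mul_rpow hApos.le hs0, hAdef, ← Real.rpow_mul (by positivity),
      one_div_mul_cancel (by linarith : μ ≠ 0), Real.rpow_one]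
  have e2 : t ^ (2:ℝ) = t ^ (2:ℕ) := by
    rw [← Real.rpow_natCast t 2]; norm_num
  have hBμs : (Cω * t ^ 2 / A) ^ μs = (Cω / A) ^ μs * t ^ (2 * μs) := by
    rw [Real.rpow_mul ht0.le, e2,
      ← Real.mul_rpow (by positivity) (by positivity)]
    congr 1
    ring
  have hyoung : Cω * t ^ 2 * s ≤ Cμ * s ^ μ + (Cω / A) ^ μs / μs * t ^ (2 * μs) := by
    have hls : A * s * (Cω * t ^ 2 / A) = Cω * t ^ 2 * s := by
      field_simp
    rw [hls, hAμ, hBμs] at young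
    have hμ0 : μ ≠ 0 := by linarith
    calc Cω * t ^ 2 * s ≤ Cμ * μ * s ^ μ / μ + (Cω / A) ^ μs * t ^ (2*μs) / μs := young
      _ = Cμ * s ^ μ + (Cω / A) ^ μs / μs * t ^ (2 * μs) := by
          field_simp
  -- term 2
  have hq0 : q ≠ 0 := by linarith
  have hmid : (t ^ (-q) * ‖v‖ ^ q) ^ (1 / q) = t⁻¹ * ‖v‖ := by
    rw [Real.rpow_neg ht0.le, ← Real.inv_rpow ht0.le,
      ← Real.mul_rpow (by positivity) (norm_nonneg _),
      ← Real.rpow_mul (by positivity), mul_one_div_cancel hq0, Real.rpow_one]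
  have h2 : t * ωstar (f - g) ≤ t ^ 2 * (‖p2bar‖ * (t ^ (-q) * ‖v‖ ^ q) ^ (1 / q)) := by
    rw [hmid, hc]
    have : (p2bar.comp T) (f - g) = p2bar v := by rw [ContinuousLinearMap.comp_apply, hTfg]
    rw [this]
    have hb2 : p2bar v ≤ ‖p2bar‖ * ‖v‖ :=
      le_trans (le_abs_self _) (p2bar.le_opNorm v)
    have : t ^ 2 * (‖p2bar‖ * (t⁻¹ * ‖v‖)) = t * (‖p2bar‖ * ‖v‖) := by
      field_simp
    rw [this]
    exact mul_le_mul_of_nonneg_left hb2 ht0.le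
  -- combine
  have key : (ξ t - pbar.comp T) (g - f) ≤
      (R f - R g - (ξ t) (f - g)) + t ^ 2 * (‖p2bar‖ * (t ^ (-q) * ‖v‖ ^ q) ^ (1 / q))
        + (Cω / A) ^ μs / μs * t ^ (2 * μs) := by
    rw [hdecomp]
    have := le_trans h1 hyoung
    linarith [hbreg]
  simpa [hgdef, hvdef] using key
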